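/- Let A be a finite abelian group, P_A the quotient of the free commutative monoid on A × A by the congruence generated by e_{λ,λ'} ∼ e_{λ',λ}, e_{0,λ} ∼ 0, and e_{λ,λ'} + e_{λ+λ',λ''} ∼ e_{λ',λ''} + e_{λ'+λ'',λ}, and Q_A = P_A ×_e A the twisted product with respect to the universal 2-cocycle e. Then P_A and Q_A are finitely generated, quasi-integral (x + y = x implies y = 0), and sharp (x + y = 0 implies x = y = 0). -/

import Mathlib

/-- The generating relations of the congruence defining the universal monoid `P_A`:
`e_{λ,λ'} ∼ e_{λ',λ}`, `e_{0,λ} ∼ 0`, and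
`e_{λ,λ'} + e_{λ+λ',λ''} ∼ e_{λ',λ''} + e_{λ'+λ'',λ}`. -/
def univPARel (A : Type*) [AddCommGroup A] :
    ((A × A) →₀ ℕ) → ((A × A) →₀ ℕ) → Prop := fun x y =>
  (∃ a b : A, x = Finsupp.single (a, b) 1 ∧ y = Finsupp.single (b, a) 1) ∨
  (∃ a : A, x = Finsupp.single ((0 : A), a) 1 ∧ y = 0) ∨
  (∃ a b c : A, x = Finsupp.single (a, b) 1 + Finsupp.single (a + b, c) 1 ∧
      y = Finsupp.single (b, c) 1 + Finsupp.single (b + c, a) 1)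

/-- The universal monoid `P_A`: the quotient of the free commutative monoid on `A × A` by
the congruence generated by `univPARel A`. -/
abbrev UnivPA (A : Type*) [AddCommGroup A] :=
  (addConGen (univPARel A)).Quotient

/-- The class of `e_{λ,λ'}` in `P_A`; `(λ, λ') ↦ e_{λ,λ'}` is the universal
2-cocycle. -/
noncomputable def univPAGen {A : Type*} [AddCommGroup A] (a b : A) : UnivPA A :=
  (addConGen (univPARel A)).mk' (Finsupp.single (a, b) 1)

/-- A type synonym for the underlying set of the twisted product `Q_A = P_A ×_e A`. -/
structure TwistedProd (P A : Type*) where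
  fst : P
  snd : A

section Aux
variable {A : Type*} [AddCommGroup A]

open Classical in
/-- indicator of nonzero -/
noncomputable def sIdx (a : A) : ℕ := if a = 0 then 0 else 1

noncomputable def wIdx (a b : A) : ℕ := sIdx a + sIdx b - sIdx (a + b)

lemma sIdx_le (a b : A) : sIdx (a + b) ≤ sIdx a + sIdx b := by
  unfold sIdx; classical
  split_ifs with h1 h2 h3 <;> simp_all

lemma sIdx_zero : sIdx (0 : A) = 0 := by unfold sIdx; simp

lemma sIdx_eq_zero_iff (a : A) : sIdx a = 0 ↔ a = 0 := by
  unfold sIdx; classical split_ifs <;> simp_all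

lemma wIdx_add_sIdx (a b : A) : wIdx a b + sIdx (a + b) = sIdx a + sIdx b :=
  Nat.sub_add_cancel (sIdx_le a b)

lemma wIdx_comm (a b : A) : wIdx a b = wIdx b a := by
  unfold wIdx; rw [add_comm (sIdx a), add_comm a b]

lemma wIdx_zero_left (a : A) : wIdx 0 a = 0 := by
  unfold wIdx sIdx; classical simp

lemma wIdx_cocycle (a b c : A) :
    wIdx a b + wIdx (a + b) c = wIdx b c + wIdx (b + c) a := by
  have h1 := wIdx_add_sIdx a b
  have h2 := wIdx_add_sIdx (a + b) c
  have h3 := wIdx_add_sIdx b c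
  have h4 := wIdx_add_sIdx (b + c) a
  have e : (a + b) + c = (b + c) + a := by abel
  rw [e] at h2
  omega

lemma wIdx_eq_zero_iff (a b : A) : wIdx a b = 0 ↔ a = 0 ∨ b = 0 := by
  unfold wIdx sIdx; classical
  split_ifs with h1 h2 h3 <;> simp_all

/-- weight homomorphism on the free monoid -/
noncomputable def wHom : ((A × A) →₀ ℕ) →+ ℕ :=
  Finsupp.liftAddHom (fun p => AddMonoidHom.mulRight (wIdx p.1 p.2))

lemma wHom_single (p : A × A) (n : ℕ) : wHom (Finsupp.single p n) = n * wIdx p.1 p.2 := by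
  simp [wHom]

lemma wHom_ker : addConGen (univPARel A) ≤ AddCon.ker wHom := by
  refine AddCon.addConGen_le.mpr ?_
  rintro x y (⟨a, b, rfl, rfl⟩ | ⟨a, rfl, rfl⟩ | ⟨a, b, c, rfl, rfl⟩) <;>
    simp only [AddCon.ker_rel, map_add, wHom_single, map_zero, one_mul]
  · exact wIdx_comm a b
  · exact wIdx_zero_left a
  · exact wIdx_cocycle a b c

/-- the induced hom on `P_A` -/
noncomputable def wBar : UnivPA A →+ ℕ :=
  (addConGen (univPARel A)).lift wHom wHom_ker

lemma wBar_mk' (x : (A × A) →₀ ℕ) :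
    wBar ((addConGen (univPARel A)).mk' x) = wHom x :=
  AddCon.lift_mk' _ _

lemma wBar_gen (a b : A) : wBar (univPAGen a b) = wIdx a b := by
  rw [univPAGen, wBar_mk', wHom_single, one_mul]

lemma univPAGen_swap (a b : A) : univPAGen a b = univPAGen b a :=
  (AddCon.eq _).mpr (AddConGen.Rel.of _ _ (Or.inl ⟨a, b, rfl, rfl⟩))

lemma univPAGen_zero_left (a : A) : univPAGen (0 : A) a = 0 := by
  have : (0 : UnivPA A) = (addConGen (univPARel A)).mk' 0 := (map_zero _).symm
  rw [this]
  exact (AddCon.eq _).mpr (AddConGen.Rel.of _ _ (Or.inr (Or.inl ⟨a, rfl, rfl⟩)))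

lemma univPAGen_zero_right (a : A) : univPAGen a 0 = 0 := by
  rw [univPAGen_swap, univPAGen_zero_left]

lemma single_succ (p : A × A) (n : ℕ) :
    Finsupp.single p (n + 1) = Finsupp.single p n + Finsupp.single p 1 := by
  rw [← Finsupp.single_add]

lemma mk'_single_one (p : A × A) :
    (addConGen (univPARel A)).mk' (Finsupp.single p 1) = univPAGen p.1 p.2 := by
  simp [univPAGen]

lemma mk'_single_gen (p : A × A) (n : ℕ) (hgen : univPAGen p.1 p.2 = 0) :
    (addConGen (univPARel A)).mk' (Finsupp.single p n) = 0 := by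
  induction n with
  | zero => simp
  | succ m ih => rw [single_succ, map_add, ih, mk'_single_one, hgen, add_zero]

lemma mk'_single_mem (C : AddSubmonoid (UnivPA A)) (p : A × A)
    (h : univPAGen p.1 p.2 ∈ C) (n : ℕ) :
    (addConGen (univPARel A)).mk' (Finsupp.single p n) ∈ C := by
  induction n with
  | zero => simpa using zero_mem C
  | succ m ih =>
    rw [single_succ, map_add, mk'_single_one]
    exact add_mem ih h

lemma wBar_eq_zero {q : UnivPA A} (h : wBar q = 0) : q = 0 := by
  obtain ⟨x, rfl⟩ := AddCon.mk'_surjective q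
  rw [wBar_mk'] at h
  induction x using Finsupp.induction with
  | zero => exact map_zero _
  | single_add p n f hp hn ih =>
    rw [map_add, wHom_single] at h
    have h1 : n * wIdx p.1 p.2 = 0 := by omega
    have h2 : wHom f = 0 := by omega
    rw [map_add, ih h2, add_zero]
    have h3 : wIdx p.1 p.2 = 0 := (Nat.mul_eq_zero.mp h1).resolve_left hn
    refine mk'_single_gen p n ?_
    rcases (wIdx_eq_zero_iff p.1 p.2).mp h3 with h | h
    · rw [h, univPAGen_zero_left]
    · rw [h, univPAGen_zero_right]

lemma univPA_fg (A : Type*) [AddCommGroup A] [Fintype A] : AddMonoid.FG (UnivPA A) := by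
  rw [AddMonoid.fg_iff]
  refine ⟨Set.range (fun p : A × A => univPAGen p.1 p.2), ?_, Set.finite_range _⟩
  rw [eq_top_iff]
  rintro q -
  obtain ⟨x, rfl⟩ := AddCon.mk'_surjective q
  induction x using Finsupp.induction with
  | zero => rw [map_zero]; exact zero_mem _
  | single_add p n f hp hn ih =>
    rw [map_add]
    exact add_mem (mk'_single_mem _ p (AddSubmonoid.subset_closure (Set.mem_range_self p)) n) ih

end Aux

section Q

variable {A : Type*} [AddCommGroup A] [AddCommMonoid (TwistedProd (UnivPA A) A)]

noncomputable def psiQ (x : TwistedProd (UnivPA A) A) : ℕ := wBar x.fst + sIdx x.snd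

lemma psiQ_add
    (hadd : ∀ x y : TwistedProd (UnivPA A) A,
      x + y = ⟨x.fst + y.fst + univPAGen x.snd y.snd, x.snd + y.snd⟩)
    (x y : TwistedProd (UnivPA A) A) : psiQ (x + y) = psiQ x + psiQ y := by
  rw [hadd]
  show wBar (x.fst + y.fst + univPAGen x.snd y.snd) + sIdx (x.snd + y.snd) = _
  rw [map_add, map_add, wBar_gen]
  have := wIdx_add_sIdx x.snd y.snd
  unfold psiQ
  omega

lemma psiQ_eq_zero
    (hzero : (0 : TwistedProd (UnivPA A) A) = ⟨0, 0⟩)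
    (x : TwistedProd (UnivPA A) A) (h : psiQ x = 0) : x = 0 := by
  unfold psiQ at h
  have h1 : x.fst = 0 := wBar_eq_zero (by omega)
  have h2 : x.snd = 0 := (sIdx_eq_zero_iff _).mp (by omega)
  cases x
  rw [hzero]
  simp_all

lemma pair_zero_add
    (hadd : ∀ x y : TwistedProd (UnivPA A) A,
      x + y = ⟨x.fst + y.fst + univPAGen x.snd y.snd, x.snd + y.snd⟩)
    (p q : UnivPA A) :
    (⟨p, 0⟩ : TwistedProd (UnivPA A) A) + ⟨q, 0⟩ = ⟨p + q, 0⟩ := by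
  rw [hadd]
  show (⟨p + q + univPAGen 0 0, 0 + 0⟩ : TwistedProd (UnivPA A) A) = _
  rw [univPAGen_zero_left, add_zero, add_zero]

lemma pair_zero_mem
    (hadd : ∀ x y : TwistedProd (UnivPA A) A,
      x + y = ⟨x.fst + y.fst + univPAGen x.snd y.snd, x.snd + y.snd⟩)
    (hzero : (0 : TwistedProd (UnivPA A) A) = ⟨0, 0⟩)
    (C : AddSubmonoid (TwistedProd (UnivPA A) A))
    (hU : ∀ a b : A, (⟨univPAGen a b, 0⟩ : TwistedProd (UnivPA A) A) ∈ C)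
    (q : UnivPA A) : (⟨q, 0⟩ : TwistedProd (UnivPA A) A) ∈ C := by
  have hz : ((⟨0, 0⟩ : TwistedProd (UnivPA A) A)) ∈ C := hzero ▸ zero_mem C
  obtain ⟨f, rfl⟩ := AddCon.mk'_surjective q
  induction f using Finsupp.induction with
  | zero => rw [map_zero]; exact hz
  | single_add p n f hp hn ih =>
    have h1 : ∀ m : ℕ,
        (⟨(addConGen (univPARel A)).mk' (Finsupp.single p m), 0⟩ :
          TwistedProd (UnivPA A) A) ∈ C := by
      intro m
      induction m with
      | zero => rw [Finsupp.single_zero, map_zero]; exact hz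
      | succ k ihk =>
        rw [single_succ, map_add, ← pair_zero_add hadd, mk'_single_one]
        exact add_mem ihk (hU p.1 p.2)
    rw [map_add, ← pair_zero_add hadd]
    exact add_mem (h1 n) ih

end Q

/-- For a finite abelian group `A`, the universal monoids `P_A` and `Q_A = P_A ×_e A`
(the twisted product with respect to the universal 2-cocycle) are finitely generated,
quasi-integral (`x + y = x` implies `y = 0`) and sharp (`x + y = 0` implies
`x = y = 0`). -/
theorem stacky_covers_PA_QA_quasi_fine_sharp (A : Type*) [AddCommGroup A] [Fintype A]
    [AddCommMonoid (TwistedProd (UnivPA A) A)]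
    (hadd : ∀ x y : TwistedProd (UnivPA A) A,
      x + y = ⟨x.fst + y.fst + univPAGen x.snd y.snd, x.snd + y.snd⟩)
    (hzero : (0 : TwistedProd (UnivPA A) A) = ⟨0, 0⟩) :
    AddMonoid.FG (UnivPA A) ∧
    (∀ x y : UnivPA A, x + y = x → y = 0) ∧
    (∀ x y : UnivPA A, x + y = 0 → x = 0 ∧ y = 0) ∧
    AddMonoid.FG (TwistedProd (UnivPA A) A) ∧
    (∀ x y : TwistedProd (UnivPA A) A, x + y = x → y = 0) ∧
    (∀ x y : TwistedProd (UnivPA A) A, x + y = 0 → x = 0 ∧ y = 0) := by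
  refine ⟨univPA_fg A, ?_, ?_, ?_, ?_, ?_⟩
  · intro x y h
    have : wBar x + wBar y = wBar x := by rw [← map_add, h]
    exact wBar_eq_zero (by omega)
  · intro x y h
    have : wBar x + wBar y = 0 := by rw [← map_add, h, map_zero]
    exact ⟨wBar_eq_zero (by omega), wBar_eq_zero (by omega)⟩
  · rw [AddMonoid.fg_iff]
    refine ⟨Set.range (fun p : A × A =>
        (⟨univPAGen p.1 p.2, 0⟩ : TwistedProd (UnivPA A) A)) ∪
      Set.range (fun a : A => (⟨0, a⟩ : TwistedProd (UnivPA A) A)), ?_,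
      (Set.finite_range _).union (Set.finite_range _)⟩
    rw [eq_top_iff]
    rintro ⟨p, a⟩ -
    have h1 : (⟨p, 0⟩ : TwistedProd (UnivPA A) A) + ⟨0, a⟩ = ⟨p, a⟩ := by
      rw [hadd]
      show (⟨p + 0 + univPAGen 0 a, 0 + a⟩ : TwistedProd (UnivPA A) A) = _
      rw [univPAGen_zero_left, add_zero, add_zero, zero_add]
    rw [← h1]
    refine add_mem (pair_zero_mem hadd hzero _ (fun a b => ?_) p)
      (AddSubmonoid.subset_closure (Or.inr (Set.mem_range_self a)))
    exact AddSubmonoid.subset_closure (Or.inl (Set.mem_range_self (a, b)))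
  · intro x y h
    have : psiQ x + psiQ y = psiQ x := by rw [← psiQ_add hadd, h]
    exact psiQ_eq_zero hzero y (by omega)
  · intro x y h
    have : psiQ x + psiQ y = psiQ (0 : TwistedProd (UnivPA A) A) := by
      rw [← psiQ_add hadd, h]
    have h0 : psiQ (0 : TwistedProd (UnivPA A) A) = 0 := by
      rw [hzero]
      show wBar 0 + sIdx (0 : A) = 0
      rw [map_zero, sIdx_zero]
    exact ⟨psiQ_eq_zero hzero x (by omega), psiQ_eq_zero hzero y (by omega)⟩
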